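/- Let ω be an integrable homogeneous 1-form defining a codimension-one degree-e foliation of ℙⁿ (hypotheses (H1)–(H4)). If the singular ideal J(ω) is a radical ideal of S, then ω has a Kupka singularity: there exists a point x : Fin (n+1) → ℂ with x ≠ 0 such that eval x (f i) = 0 for all i, and eval x (D i j) ≠ 0 for some pair of indices i, j (i.e. ω(x) = 0 but dω(x) ≠ 0). -/

import Mathlib

open MvPolynomial

private lemma degree_eq_sum {n : ℕ} (s : Fin n →₀ ℕ) : s.degree = ∑ i, s i :=
  Finset.sum_subset (Finset.subset_univ _)
    (fun _ _ hi => Finsupp.notMem_support_iff.mp hi)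

private lemma X_mul_pderiv_monomial {n : ℕ} (i : Fin n) (s : Fin n →₀ ℕ) (a : ℂ) :
    X i * pderiv i (monomial s a) = monomial s (a * s i) := by
  rw [pderiv_monomial]
  by_cases h : s i = 0
  · simp [h]
  · rw [X, monomial_mul, one_mul,
      add_tsub_cancel_of_le (Finsupp.single_le_iff.mpr (by omega))]

private lemma euler {n d : ℕ} {p : MvPolynomial (Fin n) ℂ} (hp : p.IsHomogeneous d) :
    ∑ i, X i * pderiv i p = (d : ℂ) • p := by
  conv_lhs => rw [p.as_sum]
  simp only [map_sum, Finset.mul_sum]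
  rw [Finset.sum_comm]
  conv_rhs => rw [p.as_sum]
  rw [Finset.smul_sum]
  refine Finset.sum_congr rfl fun s hs => ?_
  have hdeg : s.degree = d := by
    by_contra hne
    exact (mem_support_iff.mp hs) (hp.coeff_eq_zero hne)
  simp only [X_mul_pderiv_monomial]
  rw [← map_sum, ← Finset.mul_sum]
  have : (∑ i, (s i : ℂ)) = (d : ℂ) := by
    rw [← Nat.cast_sum, ← degree_eq_sum, hdeg]
  rw [this, smul_monomial, smul_eq_mul, mul_comm]

private lemma pderiv_isHomogeneous {n d : ℕ} {p : MvPolynomial (Fin n) ℂ}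
    (hp : p.IsHomogeneous d) (i : Fin n) : (pderiv i p).IsHomogeneous (d - 1) := by
  conv_lhs => rw [p.as_sum]
  rw [map_sum]
  apply IsHomogeneous.sum
  intro s hs
  have hdeg : s.degree = d := by
    by_contra hne
    exact (mem_support_iff.mp hs) (hp.coeff_eq_zero hne)
  rw [pderiv_monomial]
  by_cases h : s i = 0
  · simp [h]
    exact isHomogeneous_zero _ _ _
  · apply isHomogeneous_monomial
    have h2 : ∀ j ∈ Finset.univ.erase i, ((s - Finsupp.single i 1 : Fin n →₀ ℕ)) j = s j := by
      intro j hj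
      simp [Finsupp.tsub_apply, Finsupp.single_apply, (Finset.mem_erase.mp hj).1.symm]
    have h3 : ((s - Finsupp.single i 1 : Fin n →₀ ℕ)) i = s i - 1 := by
      simp [Finsupp.tsub_apply]
    rw [degree_eq_sum, ← Finset.add_sum_erase _ _ (Finset.mem_univ i),
      Finset.sum_congr rfl h2, h3]
    have heta : ∑ j ∈ Finset.univ.erase i, s j = (Finset.univ.erase i).sum ⇑s := rfl
    rw [heta]
    have hs' : s i + (Finset.univ.erase i).sum ⇑s = d := by
      rw [Finset.add_sum_erase _ s (Finset.mem_univ i), ← degree_eq_sum, hdeg]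
    omega

private lemma coeff_mul_homogeneous_eq_zero {n d : ℕ} {q g : MvPolynomial (Fin n) ℂ}
    (hg : g.IsHomogeneous d) {m : Fin n →₀ ℕ} (hm : m.degree < d) :
    coeff m (q * g) = 0 := by
  rw [coeff_mul]
  apply Finset.sum_eq_zero
  intro x hx
  have h12 : x.1 + x.2 = m := Finset.HasAntidiagonal.mem_antidiagonal.mp hx
  have hdm : x.1.degree + x.2.degree = m.degree := by
    rw [← h12]
    simp [Finsupp.degree_eq_weight_one, map_add]
  rw [hg.coeff_eq_zero (by omega), mul_zero]

private lemma low_degree_mem_span {n e : ℕ} (f : Fin n → MvPolynomial (Fin n) ℂ)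
    (H1 : ∀ i, (f i).IsHomogeneous (e-1)) {p : MvPolynomial (Fin n) ℂ} (he : 2 ≤ e)
    (hp : p.IsHomogeneous (e-2)) (hmem : p ∈ Ideal.span (Set.range f)) : p = 0 := by
  obtain ⟨c, hc⟩ := (Submodule.mem_span_range_iff_exists_fun _).mp hmem
  ext m
  rw [coeff_zero]
  by_cases hm : m.degree = e - 2
  · rw [← hc, coeff_sum]
    apply Finset.sum_eq_zero
    intro i _
    rw [smul_eq_mul]
    exact coeff_mul_homogeneous_eq_zero (H1 i) (by omega)
  · exact hp.coeff_eq_zero hm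

private lemma pderiv_sum_X_mul {n : ℕ} (f : Fin (n+1) → MvPolynomial (Fin (n+1)) ℂ)
    (j : Fin (n+1)) :
    pderiv j (∑ i, X i * f i) = f j + ∑ i, X i * pderiv j (f i) := by
  rw [map_sum]
  simp only [pderiv_mul]
  rw [Finset.sum_add_distrib]
  congr 1
  rw [Finset.sum_eq_single j]
  · rw [pderiv_X_self, one_mul]
  · intro i _ hij
    rw [pderiv_X_of_ne hij, zero_mul]
  · intro h
    exact absurd (Finset.mem_univ j) h

private lemma f_all_zero {n e : ℕ} (he : 2 ≤ e)
    (f : Fin (n+1) → MvPolynomial (Fin (n+1)) ℂ)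
    (H1 : ∀ i, (f i).IsHomogeneous (e - 1)) (H2 : ∑ i, X i * f i = 0)
    (hcl : ∀ i j, pderiv i (f j) = pderiv j (f i)) : ∀ j, f j = 0 := by
  intro j
  have h0 : f j + ∑ i, X i * pderiv j (f i) = 0 := by
    rw [← pderiv_sum_X_mul, H2, map_zero]
  have h1 : ∑ i, X i * pderiv j (f i) = ∑ i, X i * pderiv i (f j) :=
    Finset.sum_congr rfl fun i _ => by rw [hcl j i]
  rw [h1, euler (H1 j)] at h0
  have h2 : (1 + ((e-1 : ℕ) : ℂ)) • f j = 0 := by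
    rw [add_smul, one_smul]
    exact h0
  have hne : (1 + ((e-1:ℕ):ℂ)) ≠ 0 := by
    have : (1 + ((e-1:ℕ):ℂ)) = ((1 + (e-1) : ℕ) : ℂ) := by push_cast; ring
    rw [this]
    rw [Nat.cast_ne_zero]
    omega
  exact (smul_eq_zero.mp h2).resolve_left hne

private lemma eq_C_of_hom0 {n : ℕ} {p : MvPolynomial (Fin n) ℂ}
    (hp : p.IsHomogeneous 0) : p = C (coeff 0 p) := by
  ext d
  by_cases hd : d = 0
  · subst hd; simp [coeff_C]
  · rw [hp.coeff_eq_zero (by simpa [Finsupp.degree_eq_zero_iff] using hd), coeff_C,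
      if_neg (by exact fun h => hd h.symm)]

private lemma coeff_linear_zero {n : ℕ} {c : Fin n → ℂ}
    (h : ∑ m, X m * C (c m) = 0) : ∀ k, c k = 0 := by
  intro k
  have := congrArg (pderiv k) h
  rw [map_sum, map_zero] at this
  have h2 : ∀ m ∈ Finset.univ, pderiv k (X m * C (c m)) =
      if m = k then C (c m) else 0 := by
    intro m _
    rw [pderiv_mul, pderiv_C, mul_zero, add_zero]
    by_cases hm : m = k
    · subst hm; rw [pderiv_X_self, one_mul, if_pos rfl]
    · rw [pderiv_X_of_ne hm, zero_mul, if_neg hm]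
  rw [Finset.sum_congr rfl h2, Finset.sum_ite_eq' Finset.univ k (fun m => C (c m)),
    if_pos (Finset.mem_univ k)] at this
  exact (C_injective _ ℂ) (this.trans C_0.symm)

/-- **Existence of Kupka singularities:** if the singular ideal `J(ω)` of an
integrable homogeneous 1-form defining a codimension-one degree-`e` foliation of
`ℙⁿ` is radical, then there is a nonzero point `x` of the affine cone at which
`ω(x) = 0` but `dω(x) ≠ 0`. -/
theorem exists_kupka_point (n e : ℕ) (hn : 2 ≤ n) (he : 2 ≤ e)
    (f : Fin (n+1) → MvPolynomial (Fin (n+1)) ℂ)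
    (D : Fin (n+1) → Fin (n+1) → MvPolynomial (Fin (n+1)) ℂ)
    (hD : ∀ i j, D i j = pderiv i (f j) - pderiv j (f i))
    (H1 : ∀ i, (f i).IsHomogeneous (e - 1)) (H1' : ∃ i, f i ≠ 0)
    (H2 : ∑ i, X i * f i = 0)
    (H3 : ∀ i j k, f i * D j k - f j * D i k + f k * D i j = 0)
    (H4 : ∀ g : MvPolynomial (Fin (n+1)) ℂ, (∀ i, g ∣ f i) → IsUnit g)
    (hJrad : (Ideal.span (Set.range f)).IsRadical) :
    ∃ x : Fin (n+1) → ℂ, x ≠ 0 ∧ (∀ i, eval x (f i) = 0) ∧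
      ∃ i j, eval x (D i j) ≠ 0 := by
  by_contra hcon
  push_neg at hcon
  -- hcon : ∀ x, x ≠ 0 → (∀ i, eval x (f i) = 0) → ∀ i j, eval x (D i j) = 0
  obtain ⟨i1, hi1⟩ := H1'
  have hDhom : ∀ i j, (D i j).IsHomogeneous (e - 2) := by
    intro i j
    rw [hD]
    have h1 := pderiv_isHomogeneous (H1 j) i
    have h2 := pderiv_isHomogeneous (H1 i) j
    have hee : e - 1 - 1 = e - 2 := by omega
    rw [hee] at h1 h2
    exact h1.sub h2
  -- If dω = 0 identically, then ω = 0, contradiction.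
  have hDzero_contra : (∀ i j, D i j = 0) → False := by
    intro hD0
    refine hi1 (f_all_zero he f H1 H2 (fun i j => ?_) i1)
    have := hD0 i j
    rw [hD] at this
    exact (sub_eq_zero.mp this)
  rcases eq_or_lt_of_le he with he2 | he3
  · -- e = 2 : coefficients of dω are constants
    by_cases hD0 : ∀ i j, D i j = 0
    · exact hDzero_contra hD0
    push_neg at hD0
    obtain ⟨p, q, hpq⟩ := hD0
    have h1' : ∀ i, (f i).IsHomogeneous 1 := by
      intro i
      have := H1 i
      rwa [show e - 1 = 1 by omega] at this
    set A : Fin (n+1) → Fin (n+1) → ℂ :=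
      fun m i => coeff 0 (pderiv m (f i)) with hAdef
    have hCA : ∀ m i, pderiv m (f i) = C (A m i) := by
      intro m i
      exact eq_C_of_hom0 (by simpa using pderiv_isHomogeneous (h1' i) m)
    have hrep : ∀ i, f i = ∑ m, X m * C (A m i) := by
      intro i
      have h := euler (h1' i)
      rw [Nat.cast_one, one_smul] at h
      rw [← h]
      exact Finset.sum_congr rfl fun m _ => by rw [hCA]
    have heval : ∀ (x : Fin (n+1) → ℂ) i, eval x (f i) = ∑ m, x m * A m i := by
      intro x i
      rw [hrep i, map_sum]
      exact Finset.sum_congr rfl fun m _ => by rw [map_mul, eval_X, eval_C]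
    have hDC : ∀ i j, D i j = C (A i j - A j i) := by
      intro i j
      rw [hD, hCA, hCA, C_sub]
    have hd : A p q - A q p ≠ 0 := by
      intro h0
      exact hpq (by rw [hDC, h0, C_0])
    -- scalar Plücker relations
    have hplk : ∀ m i j k, A m i * (A j k - A k j) - A m j * (A i k - A k i)
        + A m k * (A i j - A j i) = 0 := by
      intro m i j k
      have key : ∑ m, X m * C (A m i * (A j k - A k j) - A m j * (A i k - A k i)
          + A m k * (A i j - A j i)) = 0 := by
        have h3' := H3 i j k
        rw [hDC i j, hDC i k, hDC j k, hrep i, hrep j, hrep k,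
          Finset.sum_mul, Finset.sum_mul, Finset.sum_mul,
          ← Finset.sum_sub_distrib, ← Finset.sum_add_distrib] at h3'
        rw [← h3']
        apply Finset.sum_congr rfl
        intro m _
        simp only [C_sub, C_add, C_mul]
        ring
      exact coeff_linear_zero key m
    -- find a nonzero common zero of the two linear forms given by rows p and q
    obtain ⟨x, hxker, hxne⟩ : ∃ x : Fin (n+1) → ℂ,
        ((Matrix.of ![fun m => A m p, fun m => A m q]).mulVecLin) x = 0 ∧ x ≠ 0 := by
      set M : Matrix (Fin 2) (Fin (n+1)) ℂ := Matrix.of ![fun m => A m p, fun m => A m q]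
      have hrk := LinearMap.finrank_range_add_finrank_ker M.mulVecLin
      rw [Module.finrank_fintype_fun_eq_card, Fintype.card_fin] at hrk
      have hr2 : Module.finrank ℂ (LinearMap.range M.mulVecLin) ≤ 2 := by
        have := Submodule.finrank_le (LinearMap.range M.mulVecLin)
        rwa [Module.finrank_fintype_fun_eq_card, Fintype.card_fin] at this
      have hker : LinearMap.ker M.mulVecLin ≠ ⊥ := by
        intro hbot
        rw [hbot, finrank_bot] at hrk
        omega
      obtain ⟨x, hx, hxne⟩ := Submodule.exists_mem_ne_zero_of_ne_bot hker
      exact ⟨x, hx, hxne⟩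
    have hx1 : ∑ m, A m p * x m = 0 := by
      have := congrFun hxker 0
      simpa [Matrix.mulVecLin, Matrix.mulVec, dotProduct] using this
    have hx2 : ∑ m, A m q * x m = 0 := by
      have := congrFun hxker 1
      simpa [Matrix.mulVecLin, Matrix.mulVec, dotProduct] using this
    have hfx : ∀ i, eval x (f i) = 0 := by
      intro i
      rw [heval]
      have key : (∑ m, x m * A m i) * (A p q - A q p) = 0 := by
        rw [Finset.sum_mul]
        have hterm : ∀ m ∈ Finset.univ, x m * A m i * (A p q - A q p) =
            (A m q * x m) * (A p i - A i p) - (A m p * x m) * (A q i - A i q) := by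
          intro m _
          have h := hplk m p q i
          linear_combination (x m) * h
        rw [Finset.sum_congr rfl hterm, Finset.sum_sub_distrib,
          ← Finset.sum_mul, ← Finset.sum_mul, hx1, hx2, zero_mul, zero_mul, sub_zero]
      exact (mul_eq_zero.mp key).resolve_right hd
    have := hcon x hxne hfx p q
    rw [hDC, eval_C] at this
    exact hd this
  · -- 3 ≤ e : by the Nullstellensatz the coefficients of dω lie in J(ω),
    -- hence vanish by degree reasons.
    apply hDzero_contra
    intro i j
    apply low_degree_mem_span f H1 he (hDhom i j)
    have hmem : D i j ∈ (Ideal.span (Set.range f)).radical := by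
      rw [← vanishingIdeal_zeroLocus_eq_radical (K := ℂ)]
      refine (mem_vanishingIdeal_iff).mpr fun x hx => ?_
      by_cases hx0 : x = 0
      · subst hx0
        change eval 0 (D i j) = 0
        rw [eval_zero]
        have : Finsupp.degree (0 : Fin (n+1) →₀ ℕ) ≠ e - 2 := by
          rw [map_zero]
          omega
        exact (hDhom i j).coeff_eq_zero this
      · exact hcon x hx0
          (fun i => (mem_zeroLocus_iff.mp hx) _ (Ideal.subset_span ⟨i, rfl⟩)) i j
    exact hJrad.radical ▸ hmem
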